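/- Let R be a discrete valuation ring of characteristic p > 0 (p prime) with uniformizer π, fraction field K and residue field k, and set C′ := R[z]/(π^{p−1} z^p − z). Then: (1) C′ has no π-torsion (so C′ is flat over R); (2) the generic fibre K ⊗_R C′ has dimension p as a K-vector space; (3) the special fibre k ⊗_R C′ = C′/πC′ is isomorphic to k as a k-algebra; and (4) C′ is NOT finitely generated as an R-module. (Thus the R-group scheme M = Spec C′ of Example 2.3 is flat and quasi-finite but not finite over R.) -/

import Mathlib

open Polynomial
open scoped TensorProduct

set_option maxHeartbeats 1000000

section BaseChange
variable (R S : Type*) [CommRing R] [CommRing S] [Algebra R S] (f : R[X])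

noncomputable def auxRight :
    (R[X] ⧸ Ideal.span {f}) →ₐ[R] (S[X] ⧸ Ideal.span {f.map (algebraMap R S)}) :=
  Ideal.Quotient.liftₐ _
    ((Ideal.Quotient.mkₐ R _).comp (Polynomial.mapAlgHom (Algebra.ofId R S)))
    (by
      intro a ha
      obtain ⟨c, hc⟩ := Ideal.mem_span_singleton'.mp ha
      subst hc
      simp only [AlgHom.comp_apply, Polynomial.coe_mapAlgHom, Ideal.Quotient.mkₐ_eq_mk,
        Polynomial.map_mul, Algebra.ofId, AlgHom.coe_mk, RingHom.coe_coe]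
      rw [Ideal.Quotient.eq_zero_iff_mem]
      exact Ideal.mul_mem_left _ _ (Ideal.subset_span rfl))

@[simp] lemma auxRight_mk (g : R[X]) :
    auxRight R S f (Ideal.Quotient.mk _ g) =
      Ideal.Quotient.mk _ (g.map (algebraMap R S)) := by
  simp [auxRight, Algebra.ofId]
  exact Ideal.Quotient.lift_mk _ _ _

noncomputable def auxFwd :
    (S ⊗[R] (R[X] ⧸ Ideal.span {f})) →ₐ[S] (S[X] ⧸ Ideal.span {f.map (algebraMap R S)}) :=
  Algebra.TensorProduct.lift (Algebra.ofId S _) (auxRight R S f)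
    (fun _ _ => Commute.all _ _)

noncomputable def auxBwd :
    (S[X] ⧸ Ideal.span {f.map (algebraMap R S)}) →ₐ[S] (S ⊗[R] (R[X] ⧸ Ideal.span {f})) :=
  Ideal.Quotient.liftₐ _
    (Polynomial.aeval ((1 : S) ⊗ₜ[R] (Ideal.Quotient.mk (Ideal.span {f}) X)))
    (by
      intro a ha
      obtain ⟨c, hc⟩ := Ideal.mem_span_singleton'.mp ha
      subst hc
      rw [map_mul]
      have h0 : Polynomial.aeval ((1 : S) ⊗ₜ[R] (Ideal.Quotient.mk (Ideal.span {f}) X))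
          (f.map (algebraMap R S)) = 0 := by
        rw [Polynomial.aeval_map_algebraMap]
        have : (1 : S) ⊗ₜ[R] (Ideal.Quotient.mk (Ideal.span {f}) X) =
            (Algebra.TensorProduct.includeRight :
              (R[X] ⧸ Ideal.span {f}) →ₐ[R] S ⊗[R] (R[X] ⧸ Ideal.span {f}))
              ((Ideal.Quotient.mkₐ R (Ideal.span {f})) X) := rfl
        rw [this, Polynomial.aeval_algHom_apply, Polynomial.aeval_algHom_apply]
        simp only [Polynomial.aeval_X_left_apply, Ideal.Quotient.mkₐ_eq_mk]
        rw [show (Ideal.Quotient.mk (Ideal.span {f})) f = 0 from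
          Ideal.Quotient.eq_zero_iff_mem.mpr (Ideal.subset_span rfl), map_zero]
      rw [h0]; exact mul_zero (M₀ := S ⊗[R] (R[X] ⧸ Ideal.span {f})) _)

/-- Base change of `R[X]/(f)` along `R → S`. -/
noncomputable def tensorQuotEquiv :
    (S ⊗[R] (R[X] ⧸ Ideal.span {f})) ≃ₐ[S] (S[X] ⧸ Ideal.span {f.map (algebraMap R S)}) :=
  AlgEquiv.ofAlgHom (auxFwd R S f) (auxBwd R S f)
    (by
      apply Ideal.Quotient.algHom_ext
      apply Polynomial.algHom_ext
      simp [auxBwd, auxFwd, Ideal.Quotient.liftₐ_apply]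
      erw [Ideal.Quotient.lift_mk]
      simp)
    (by
      apply Algebra.TensorProduct.ext
      · exact Subsingleton.elim _ _
      · apply Ideal.Quotient.algHom_ext
        apply Polynomial.algHom_ext
        simp [auxBwd, auxFwd, Ideal.Quotient.liftₐ_apply]
        erw [Ideal.Quotient.lift_mk]
        simp)

end BaseChange

/-- Let `R` be a discrete valuation ring of characteristic `p > 0` with
uniformizer `π`, fraction field `K` and residue field `k`, and set
`C′ := R[z]/(π^{p−1} z^p − z)`.  Then: (1) `C′` has no `π`-torsion (so `C′` is flat over `R`);
(2) the generic fibre `K ⊗_R C′` has dimension `p` as a `K`-vector space; (3) the special fibre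
`k ⊗_R C′` is isomorphic to `k` as a `k`-algebra; and (4) `C′` is NOT finitely generated as an
`R`-module.  (The group scheme `M` of Example 2.3 is flat and quasi-finite but not finite.) -/
theorem quasifinite_group_scheme_M
    (R : Type*) [CommRing R] [IsDomain R] [IsDiscreteValuationRing R]
    (p : ℕ) [Fact p.Prime] [CharP R p]
    (π : R) (hπ : Irreducible π) :
    (∀ c : Polynomial R ⧸ Ideal.span ({C (π ^ (p - 1)) * X ^ p - X} : Set (Polynomial R)),
      algebraMap R
        (Polynomial R ⧸ Ideal.span ({C (π ^ (p - 1)) * X ^ p - X} : Set (Polynomial R))) π * c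
          = 0 → c = 0) ∧
    Module.finrank (FractionRing R)
      ((FractionRing R) ⊗[R]
        (Polynomial R ⧸ Ideal.span ({C (π ^ (p - 1)) * X ^ p - X} : Set (Polynomial R)))) = p ∧
    Nonempty
      (((IsLocalRing.ResidueField R) ⊗[R]
          (Polynomial R ⧸ Ideal.span ({C (π ^ (p - 1)) * X ^ p - X} : Set (Polynomial R))))
        ≃ₐ[IsLocalRing.ResidueField R] (IsLocalRing.ResidueField R)) ∧
    ¬ Module.Finite R
        (Polynomial R ⧸ Ideal.span ({C (π ^ (p - 1)) * X ^ p - X} : Set (Polynomial R))) := by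
  have hp2 : 2 ≤ p := (Fact.out : p.Prime).two_le
  set f : R[X] := C (π ^ (p - 1)) * X ^ p - X with hf
  -- (1) no π-torsion
  have h1 : ∀ c : R[X] ⧸ Ideal.span {f},
      algebraMap R (R[X] ⧸ Ideal.span {f}) π * c = 0 → c = 0 := by
    intro c hc
    obtain ⟨g, rfl⟩ := Ideal.Quotient.mk_surjective c
    have hmk : algebraMap R (R[X] ⧸ Ideal.span {f}) π
        = Ideal.Quotient.mk (Ideal.span {f}) (C π) := rfl
    have hmem : C π * g ∈ Ideal.span {f} := by
      rw [← Ideal.Quotient.eq_zero_iff_mem, map_mul, ← hmk]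
      exact hc
    obtain ⟨a, ha⟩ := Ideal.mem_span_singleton'.mp hmem
    have hπp : Prime π := irreducible_iff_prime.mp hπ
    have hCπ : Prime (C π : R[X]) := Polynomial.prime_C_iff.mpr hπp
    rcases hCπ.2.2 a f ⟨g, ha⟩ with h | h
    · obtain ⟨a', rfl⟩ := h
      have hcan : C π * (a' * f) = C π * g := by rw [← ha]; ring
      have hg : g = a' * f :=
        (mul_left_cancel₀ (Polynomial.C_ne_zero.mpr hπ.ne_zero) hcan).symm
      exact Ideal.Quotient.eq_zero_iff_mem.mpr
        (hg ▸ Ideal.mem_span_singleton'.mpr ⟨a', rfl⟩)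
    · exfalso
      have hdvd1 : π ∣ f.coeff 1 := (Polynomial.C_dvd_iff_dvd_coeff π f).mp h 1
      have hco : f.coeff 1 = -1 := by
        rw [hf, coeff_sub, coeff_C_mul, coeff_X_pow, if_neg (by omega : ¬ (1 = p)),
          coeff_X_one]
        ring
      rw [hco] at hdvd1
      exact hπ.not_isUnit (isUnit_of_dvd_one ((dvd_neg).mp hdvd1))
  -- (2) generic fibre
  set K := FractionRing R
  have ha0 : (algebraMap R K) (π ^ (p - 1)) ≠ 0 :=
    (map_ne_zero_iff _ (IsFractionRing.injective R K)).mpr (pow_ne_zero _ hπ.ne_zero)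
  have hmapK : f.map (algebraMap R K) = C ((algebraMap R K) (π ^ (p - 1))) * X ^ p - X := by
    simp [hf]
  have hdK : (f.map (algebraMap R K)).natDegree = p := by
    rw [hmapK, natDegree_sub_eq_left_of_natDegree_lt, natDegree_C_mul_X_pow _ _ ha0]
    rw [natDegree_X, natDegree_C_mul_X_pow _ _ ha0]; omega
  have hgne : f.map (algebraMap R K) ≠ 0 := by
    intro h0
    rw [h0, natDegree_zero] at hdK
    omega
  have hfrK : Module.finrank K (K[X] ⧸ Ideal.span {f.map (algebraMap R K)}) = p := by
    have hpb := PowerBasis.finrank (AdjoinRoot.powerBasis hgne)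
    rw [AdjoinRoot.powerBasis_dim] at hpb
    exact hpb.trans hdK
  have h2 : Module.finrank K (K ⊗[R] (R[X] ⧸ Ideal.span {f})) = p := by
    rw [(tensorQuotEquiv R K f).toLinearEquiv.finrank_eq]
    exact hfrK
  -- (3) special fibre
  set k := IsLocalRing.ResidueField R
  have hπ0 : algebraMap R k π = 0 :=
    Ideal.Quotient.eq_zero_iff_mem.mpr (((IsLocalRing.mem_maximalIdeal _).mpr hπ.not_isUnit))
  have hmapk : f.map (algebraMap R k) = -X := by
    simp [hf, hπ0, zero_pow (show p - 1 ≠ 0 by omega)]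
  have hspan : Ideal.span {f.map (algebraMap R k)} = Ideal.span {(X : k[X]) - C 0} := by
    rw [hmapk, show (X : k[X]) - C 0 = X by simp, Ideal.span_singleton_neg]
  have e3 : (k ⊗[R] (R[X] ⧸ Ideal.span {f})) ≃ₐ[k] k :=
    ((tensorQuotEquiv R k f).trans (Ideal.quotientEquivAlgOfEq k hspan)).trans
      (Polynomial.quotientSpanXSubCAlgEquiv (0 : k))
  refine ⟨h1, h2, ⟨e3⟩, ?_⟩
  -- (4) not module-finite
  intro hfin
  haveI : NoZeroSMulDivisors R (R[X] ⧸ Ideal.span {f}) := by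
    constructor
    intro a c h
    by_cases ha : a = 0
    · exact Or.inl ha
    right
    obtain ⟨n, u, hu⟩ := IsDiscreteValuationRing.associated_pow_irreducible ha hπ
    have hπn : (π ^ n : R) • c = 0 := by
      rw [← hu, mul_comm, mul_smul, h, smul_zero]
    have key : ∀ (m : ℕ) (d : R[X] ⧸ Ideal.span {f}), (π ^ m : R) • d = 0 → d = 0 := by
      intro m
      induction m with
      | zero => intro d hd; simpa using hd
      | succ m ih =>
        intro d hd
        apply ih
        apply h1
        rw [← Algebra.smul_def, ← mul_smul, ← pow_succ']
        exact hd
    exact key n c hπn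
  haveI : Module.Free R (R[X] ⧸ Ideal.span {f}) :=
    Module.free_of_finite_type_torsion_free'
  have hK' : Module.finrank K (K ⊗[R] (R[X] ⧸ Ideal.span {f}))
      = Module.finrank R (R[X] ⧸ Ideal.span {f}) := Module.finrank_baseChange
  have hk' : Module.finrank k (k ⊗[R] (R[X] ⧸ Ideal.span {f}))
      = Module.finrank R (R[X] ⧸ Ideal.span {f}) := Module.finrank_baseChange
  have hone : Module.finrank k (k ⊗[R] (R[X] ⧸ Ideal.span {f})) = 1 := by
    rw [e3.toLinearEquiv.finrank_eq, Module.finrank_self]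
  omega
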